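/- Let g : ℝ → ℝ be of the form g(x) = a + b cos x + c sin x for real constants a, b, c, and let d ≥ 2 be an integer. Then for every x ∈ ℝ, g^{(d)}(x) = (2 sin(π/d))^{−d} · [ (1 + (−1)^d) g(x + π) + Σ_{i=1}^{d−1} (−1)^{i+d} C(d,i) g(x + 2πi/d − π) ], where C(d,i) is the binomial coefficient. In particular, the d-th unmixed derivative can be computed from at most d evaluations of g. -/

import Mathlib

private lemma iter_deriv_trig (a b c : ℝ) :
    ∀ d : ℕ, 1 ≤ d →
    iteratedDeriv d (fun x => a + b * Real.cos x + c * Real.sin x)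
      = fun x => b * Real.cos (x + d * (Real.pi/2)) + c * Real.sin (x + d * (Real.pi/2)) := by
  intro d hd
  induction d with
  | zero => omega
  | succ n ih =>
    rcases Nat.eq_zero_or_pos n with hn | hn
    · subst hn
      rw [iteratedDeriv_one]
      funext y
      have h1 : HasDerivAt (fun x => a + b * Real.cos x + c * Real.sin x)
          (0 + b * (-Real.sin y) + c * Real.cos y) y := by
        exact (((hasDerivAt_const y a).add ((Real.hasDerivAt_cos y).const_mul b)).add
          ((Real.hasDerivAt_sin y).const_mul c))
      rw [h1.deriv]
      rw [show y + ((0:ℕ)+1 : ℕ) * (Real.pi/2) = y + Real.pi/2 by norm_num,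
        Real.cos_add_pi_div_two, Real.sin_add_pi_div_two]
      ring
    · rw [iteratedDeriv_succ, ih hn]
      funext y
      have h2 : HasDerivAt (fun x : ℝ => x + (n : ℝ) * (Real.pi/2)) 1 y :=
        (hasDerivAt_id y).add_const _
      have hcos : HasDerivAt (fun x : ℝ => Real.cos (x + n * (Real.pi/2)))
          (-Real.sin (y + n * (Real.pi/2)) * 1) y :=
        (Real.hasDerivAt_cos _).comp y h2
      have hsin : HasDerivAt (fun x : ℝ => Real.sin (x + n * (Real.pi/2)))
          (Real.cos (y + n * (Real.pi/2)) * 1) y :=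
        (Real.hasDerivAt_sin _).comp y h2
      have h3 : HasDerivAt (fun x : ℝ => b * Real.cos (x + n * (Real.pi/2)) + c * Real.sin (x + n * (Real.pi/2))) _ y :=
        (hcos.const_mul b).add (hsin.const_mul c)
      rw [h3.deriv]
      have e1 : y + (↑(n+1) : ℝ) * (Real.pi/2) = (y + n * (Real.pi/2)) + Real.pi/2 := by
        push_cast; ring
      rw [e1, Real.cos_add_pi_div_two, Real.sin_add_pi_div_two]
      ring

private lemma omega_sub_one (d : ℕ) :
    Complex.exp (((2*Real.pi/d : ℝ) : ℂ) * Complex.I) - 1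
      = Complex.exp (((Real.pi/d : ℝ) : ℂ) * Complex.I)
          * (2 * Complex.I * (Real.sin (Real.pi/d) : ℝ)) := by
  rw [show ((Real.sin (Real.pi/d) : ℝ) : ℂ) = Complex.sin ((Real.pi/d : ℝ) : ℂ) from
    Complex.ofReal_sin _]
  set θ : ℂ := ((Real.pi/d : ℝ) : ℂ) with hθ
  have h2 : (2:ℂ) * Complex.sin θ
      = (Complex.exp (-θ * Complex.I) - Complex.exp (θ * Complex.I)) * Complex.I :=
    Complex.two_sin θ
  have key : Complex.exp (θ*Complex.I) * (2 * Complex.I * Complex.sin θ)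
      = Complex.exp (θ*Complex.I) * Complex.exp (-θ*Complex.I) * (Complex.I*Complex.I)
        - Complex.exp (θ*Complex.I) * Complex.exp (θ*Complex.I) * (Complex.I*Complex.I) := by
    rw [show (2:ℂ) * Complex.I * Complex.sin θ = ((2:ℂ) * Complex.sin θ) * Complex.I by ring, h2]
    ring
  rw [key, ← Complex.exp_add, ← Complex.exp_add, Complex.I_mul_I]
  rw [show θ*Complex.I + -θ*Complex.I = 0 by ring, Complex.exp_zero]
  rw [show θ*Complex.I + θ*Complex.I = (2*θ)*Complex.I by ring]
  have : (2:ℂ) * θ = ((2*Real.pi/d : ℝ) : ℂ) := by rw [hθ]; push_cast; ring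
  rw [this]
  ring

private lemma shift_sum (d : ℕ) (hd : 2 ≤ d) (A F : ℂ) :
    (1 + (-1:ℂ)^d) * (A + F * Complex.exp ((Real.pi:ℂ) * Complex.I))
      + ∑ i ∈ Finset.Ico 1 d, (-1:ℂ)^(i+d) * (d.choose i) *
          (A + F * Complex.exp (((2*Real.pi*i/d - Real.pi : ℝ):ℂ) * Complex.I))
    = (((2 * Real.sin (Real.pi/d))^d : ℝ) : ℂ) * Complex.I^d * F := by
  have hdne : (d:ℂ) ≠ 0 := Nat.cast_ne_zero.2 (by omega)
  set ω : ℂ := Complex.exp (((2*Real.pi/d : ℝ) : ℂ) * Complex.I) with hω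
  have hexp : ∀ i : ℕ, Complex.exp (((2*Real.pi*i/d - Real.pi : ℝ):ℂ) * Complex.I) = -(ω^i) := by
    intro i
    have e : ((2*Real.pi*i/d - Real.pi : ℝ):ℂ) * Complex.I
        = (i:ℂ) * (((2*Real.pi/d : ℝ):ℂ) * Complex.I) + -((Real.pi:ℂ) * Complex.I) := by
      push_cast; ring
    rw [e, Complex.exp_add, Complex.exp_neg, Complex.exp_pi_mul_I, Complex.exp_nat_mul, ← hω]
    rw [inv_neg, inv_one]
    ring
  have hfd : ω ^ d = 1 := by
    rw [hω, ← Complex.exp_nat_mul]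
    rw [show (d:ℂ) * (((2*Real.pi/d : ℝ):ℂ) * Complex.I) = 2*(Real.pi:ℂ)*Complex.I by
      push_cast; field_simp]
    exact Complex.exp_two_pi_mul_I
  have hdd : (-1:ℂ)^(d+d) = 1 := by
    rw [← two_mul, pow_mul]; norm_num
  have hsplit : ∑ i ∈ Finset.range (d+1), (-1:ℂ)^(i+d) * (d.choose i) * (A - F * ω^i)
      = (1 + (-1:ℂ)^d) * (A - F)
        + ∑ i ∈ Finset.Ico 1 d, (-1:ℂ)^(i+d) * (d.choose i) * (A - F * ω^i) := by
    rw [Finset.range_eq_Ico, Finset.sum_Ico_succ_top (by omega),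
      Finset.sum_eq_sum_Ico_succ_bot (by omega)]
    rw [hfd, hdd]
    simp only [Nat.choose_self, Nat.choose_zero_right, Nat.cast_one, pow_zero, zero_add]
    ring
  have hA : ∑ i ∈ Finset.range (d+1), (-1:ℂ)^(i+d) * (d.choose i) = 0 := by
    have h0 : ((-1:ℂ)+1)^d = 0 := by
      rw [show (-1:ℂ)+1 = 0 by ring]
      exact zero_pow (by omega)
    calc ∑ i ∈ Finset.range (d+1), (-1:ℂ)^(i+d) * (d.choose i)
        = (-1:ℂ)^d * ∑ i ∈ Finset.range (d+1), (-1:ℂ)^i * 1^(d-i) * (d.choose i) := by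
          rw [Finset.mul_sum]
          exact Finset.sum_congr rfl fun i _ => by rw [pow_add]; ring
      _ = (-1:ℂ)^d * (((-1:ℂ)+1)^d) := by rw [← add_pow]
      _ = 0 := by rw [h0, mul_zero]
  have hF : ∑ i ∈ Finset.range (d+1), (-1:ℂ)^(i+d) * (d.choose i) * ω^i = (ω - 1)^d := by
    rw [show ω - 1 = ω + (-1) by ring, add_pow]
    apply Finset.sum_congr rfl
    intro i hi
    have hi' : i ≤ d := by simp only [Finset.mem_range] at hi; omega
    have h1 : (-1:ℂ)^(i+d) = (-1:ℂ)^(d-i) := by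
      rw [show i + d = (d-i) + 2*i by omega, pow_add, pow_mul]; norm_num
    rw [h1]; ring
  have hOm : (ω - 1)^d = -((((2 * Real.sin (Real.pi/d))^d : ℝ):ℂ) * Complex.I^d) := by
    rw [hω, omega_sub_one d, mul_pow, ← Complex.exp_nat_mul]
    rw [show (d:ℂ) * (((Real.pi/d : ℝ):ℂ) * Complex.I) = (Real.pi:ℂ)*Complex.I by
      push_cast; field_simp]
    rw [Complex.exp_pi_mul_I]
    push_cast
    ring
  have expand : ∑ i ∈ Finset.range (d+1), (-1:ℂ)^(i+d) * (d.choose i) * (A - F * ω^i)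
      = A * (∑ i ∈ Finset.range (d+1), (-1:ℂ)^(i+d) * (d.choose i))
        - F * (∑ i ∈ Finset.range (d+1), (-1:ℂ)^(i+d) * (d.choose i) * ω^i) := by
    rw [Finset.mul_sum, Finset.mul_sum, ← Finset.sum_sub_distrib]
    exact Finset.sum_congr rfl fun i _ => by ring
  simp only [hexp, Complex.exp_pi_mul_I]
  have lhs_eq : (1 + (-1:ℂ)^d) * (A + F * (-1))
      + ∑ i ∈ Finset.Ico 1 d, (-1:ℂ)^(i+d) * (d.choose i) * (A + F * (-(ω^i)))
    = ∑ i ∈ Finset.range (d+1), (-1:ℂ)^(i+d) * (d.choose i) * (A - F * ω^i) := by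
    rw [hsplit]
    congr 1
    · ring
    · exact Finset.sum_congr rfl fun i _ => by ring
  rw [lhs_eq, expand, hA, hF, hOm]
  ring

private lemma re_mul (r : ℝ) (z : ℂ) : ((r:ℂ) * z).re = r * z.re := by
  simp [Complex.mul_re]

private lemma re_val (b c y : ℝ) :
    (((b:ℂ) - c*Complex.I) * Complex.exp ((y:ℂ) * Complex.I)).re
      = b * Real.cos y + c * Real.sin y := by
  rw [Complex.exp_mul_I]
  simp [Complex.mul_re, Complex.sub_re, Complex.sub_im, Complex.add_re, Complex.add_im,
    Complex.mul_im, Complex.cos_ofReal_re, Complex.sin_ofReal_re]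

/-- reduced iterated parameter shift rule (using `2π`-periodicity).
If `g(x) = a + b cos x + c sin x` and `d ≥ 2`, then
`g^{(d)}(x) = (2 sin(π/d))^{−d} [(1 + (−1)^d) g(x+π)
  + Σ_{i=1}^{d−1} (−1)^{i+d} C(d,i) g(x + 2πi/d − π)]`,
so the `d`-th unmixed derivative needs at most `d` evaluations of `g`. -/
theorem reduced_iterated_parameter_shift_rule
    (a b c : ℝ) (g : ℝ → ℝ)
    (hg : ∀ x, g x = a + b * Real.cos x + c * Real.sin x)
    (d : ℕ) (hd : 2 ≤ d) (x : ℝ) :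
    iteratedDeriv d g x
      = ((2 * Real.sin (Real.pi / d)) ^ d)⁻¹
          * ((1 + (-1 : ℝ) ^ d) * g (x + Real.pi)
            + ∑ i ∈ Finset.Ico 1 d,
                (-1 : ℝ) ^ (i + d) * (d.choose i)
                  * g (x + 2 * Real.pi * i / d - Real.pi)) := by
  have hπ := Real.pi_pos
  have hd1 : (1:ℝ) < d := by exact_mod_cast Nat.lt_of_lt_of_le Nat.one_lt_two hd
  have hsin : Real.sin (Real.pi / d) ≠ 0 := by
    apply ne_of_gt
    apply Real.sin_pos_of_pos_of_lt_pi
    · exact div_pos hπ (by linarith)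
    · exact div_lt_self hπ hd1
  have hpow : ((2 * Real.sin (Real.pi/d))^d : ℝ) ≠ 0 :=
    pow_ne_zero _ (mul_ne_zero two_ne_zero hsin)
  have hval : ∀ t : ℝ, ((a:ℂ) + (((b:ℂ) - c*Complex.I) * Complex.exp ((x:ℂ) * Complex.I))
      * Complex.exp ((t:ℂ) * Complex.I)).re = g (x + t) := by
    intro t
    have e : (a:ℂ) + (((b:ℂ) - c*Complex.I) * Complex.exp ((x:ℂ) * Complex.I))
        * Complex.exp ((t:ℂ) * Complex.I)
      = (a:ℂ) + ((b:ℂ) - c*Complex.I) * Complex.exp (((x+t : ℝ):ℂ) * Complex.I) := by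
      rw [show (((x+t:ℝ):ℂ)) * Complex.I = (x:ℂ)*Complex.I + (t:ℂ)*Complex.I by push_cast; ring,
        Complex.exp_add]
      ring
    rw [e, Complex.add_re, Complex.ofReal_re, re_val, hg]
    ring
  -- LHS
  have hL : iteratedDeriv d g x
      = (Complex.I^d * (((b:ℂ) - c*Complex.I) * Complex.exp ((x:ℂ) * Complex.I))).re := by
    rw [funext hg, iter_deriv_trig a b c d (by omega)]
    show b * Real.cos (x + d*(Real.pi/2)) + c * Real.sin (x + d*(Real.pi/2)) = _
    rw [← re_val b c (x + d*(Real.pi/2))]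
    congr 1
    have hI : Complex.exp (((Real.pi/2 : ℝ):ℂ) * Complex.I) = Complex.I := by
      rw [Complex.exp_mul_I, ← Complex.ofReal_cos, ← Complex.ofReal_sin,
        Real.cos_pi_div_two, Real.sin_pi_div_two]
      simp
    rw [show (((x + d*(Real.pi/2) : ℝ)):ℂ) * Complex.I
        = (x:ℂ)*Complex.I + (d:ℂ) * (((Real.pi/2 : ℝ):ℂ) * Complex.I) by push_cast; ring]
    rw [Complex.exp_add, Complex.exp_nat_mul, hI]
    ring
  -- RHS bracket
  have hR : (1 + (-1:ℝ)^d) * g (x + Real.pi)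
      + ∑ i ∈ Finset.Ico 1 d, (-1:ℝ)^(i+d) * (d.choose i) * g (x + 2*Real.pi*i/d - Real.pi)
    = ((2 * Real.sin (Real.pi/d))^d : ℝ)
        * (Complex.I^d * (((b:ℂ) - c*Complex.I) * Complex.exp ((x:ℂ) * Complex.I))).re := by
    have hs := congrArg Complex.re
      (shift_sum d hd (a:ℂ) (((b:ℂ) - c*Complex.I) * Complex.exp ((x:ℂ) * Complex.I)))
    rw [Complex.add_re, Complex.re_sum] at hs
    conv at hs => rhs; rw [mul_assoc, re_mul]
    rw [← hs]
    congr 1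
    · rw [show ((1:ℂ) + (-1)^d) = (((1 + (-1:ℝ)^d) : ℝ):ℂ) by push_cast; ring, re_mul]
      rw [show ((Real.pi:ℂ)) = (((Real.pi : ℝ)):ℂ) from rfl, hval Real.pi]
    · apply Finset.sum_congr rfl
      intro i _
      rw [show ((-1:ℂ)^(i+d) * ((d.choose i : ℕ):ℂ))
          = ((((-1:ℝ)^(i+d) * (d.choose i : ℕ)) : ℝ):ℂ) by push_cast; ring]
      rw [mul_assoc, re_mul, hval (2*Real.pi*i/d - Real.pi)]
      rw [show x + (2*Real.pi*i/d - Real.pi) = x + 2*Real.pi*i/d - Real.pi by ring]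
      ring
  rw [hL, hR, inv_mul_cancel_left₀ hpow]
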